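/- Let H be the complex vector space with basis {χ_k, η_k, χ̄_k, η̄_k : k ∈ ℤ}, Q the quadratic form on H whose associated polar form B satisfies B(χ_k, η_l) = k·δ_{k+l,0} = B(χ̄_k, η̄_l) and B = 0 on all other pairs of distinct basis vectors, with Q vanishing on each basis vector, and let A := CliffordAlgebra(Q) (so that in A one has χ_k η_l + η_l χ_k = k·δ_{k+l,0}, χ̄_k η̄_l + η̄_l χ̄_k = k·δ_{k+l,0}, and all other pairs of generators anticommute). Let J ⊆ A be the left ideal generated by {χ_k, η_k, χ̄_k, η̄_k : k > 0} ∪ {η₀ − η̄₀, χ₀ − χ̄₀}, let Fock := A/J as a left A-module, and ω := 1 + J. Then: for every left A-module V and every v ∈ V with v ≠ 0, χ_k v = η_k v = χ̄_k v = η̄_k v = 0 for all k > 0, (η₀ − η̄₀)v = 0, (χ₀ − χ̄₀)v = 0, and χ₀η₀v ≠ 0, there exists a unique A-module homomorphism φ : Fock → V with φ(ω) = v; moreover φ is injective, and hence φ is an isomorphism of A-modules between Fock and the cyclic submodule A·v of V. -/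

import Mathlib

/-! STATEMENT 0: universal property of the symplectic-fermion Fock module.

The index set is `Fin 4 × ℤ`, where the first component encodes the family of the
generator: `0 ↦ χ`, `1 ↦ η`, `2 ↦ χ̄`, `3 ↦ η̄`, and the second component is the mode
index `k ∈ ℤ`. -/

/-- The basis vectors of the space `H` spanned by `{χ_k, η_k, χ̄_k, η̄_k : k ∈ ℤ}`. -/
noncomputable def fockBasis (i : Fin 4 × ℤ) : (Fin 4 × ℤ) →₀ ℂ :=
  Finsupp.single i 1

/-- The value of the polar form on pairs of basis vectors:
`B(χ_k, η_l) = k δ_{k+l,0} = B(χ̄_k, η̄_l)` (and symmetrically), all other pairs pairing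
to zero. -/
def fockPolar (i j : Fin 4 × ℤ) : ℂ :=
  if i.1 = 0 ∧ j.1 = 1 ∧ i.2 + j.2 = 0 then (i.2 : ℂ)
  else if i.1 = 1 ∧ j.1 = 0 ∧ i.2 + j.2 = 0 then (j.2 : ℂ)
  else if i.1 = 2 ∧ j.1 = 3 ∧ i.2 + j.2 = 0 then (i.2 : ℂ)
  else if i.1 = 3 ∧ j.1 = 2 ∧ i.2 + j.2 = 0 then (j.2 : ℂ)
  else 0

namespace FockAux

abbrev I := Fin 4 × ℤ

/-- sort key -/
def kf (i : I) : ℤ := 4 * i.2 + i.1.val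

lemma kf_inj : Function.Injective kf := by
  rintro ⟨a, k⟩ ⟨b, l⟩ h
  have ha := a.isLt
  have hb := b.isLt
  simp only [kf] at h
  have : a.val = b.val ∧ k = l := by omega
  exact Prod.ext (Fin.ext this.1) this.2

/-- the order relation used for sorting -/
def rle (a b : I) : Prop := kf a ≤ kf b

instance : DecidableRel rle := fun a b => Int.decLe _ _
instance : IsTrans I rle := ⟨fun _ _ _ h h' => le_trans h h'⟩
instance : IsAntisymm I rle := ⟨fun _ _ h h' => kf_inj (le_antisymm h h')⟩
instance : IsTotal I rle := ⟨fun a b => le_total (kf a) (kf b)⟩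

/-- creation indices -/
def isC (i : I) : Prop := i.2 < 0 ∨ (i.2 = 0 ∧ (i.1 = 0 ∨ i.1 = 1))

instance : DecidablePred isC := fun i => by unfold isC; infer_instance

/-- the dual/partner index -/
def pd (i : I) : I := (![1, 0, 3, 2] i.1, -i.2)

lemma pd_pd (i : I) : pd (pd i) = i := by
  rcases i with ⟨a, k⟩
  fin_cases a <;> simp [pd]

lemma pd_snd (i : I) : (pd i).2 = -i.2 := rfl

lemma fockPolar_zero_left {i j : I} (h : i.2 = 0) : fockPolar i j = 0 := by
  rcases i with ⟨a, k⟩; rcases j with ⟨b, l⟩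
  simp only at h; subst h
  simp only [fockPolar]
  split_ifs with h1 h2 h3 h4
  · norm_num
  · obtain ⟨-, -, h⟩ := h2
    have : l = 0 := by omega
    subst this; norm_num
  · norm_num
  · obtain ⟨-, -, h⟩ := h4
    have : l = 0 := by omega
    subst this; norm_num
  · rfl

lemma fockPolar_zero_right {i j : I} (h : j.2 = 0) : fockPolar i j = 0 := by
  rcases i with ⟨a, k⟩; rcases j with ⟨b, l⟩
  simp only at h; subst h
  simp only [fockPolar]
  split_ifs with h1 h2 h3 h4
  · obtain ⟨-, -, h⟩ := h1
    have : k = 0 := by omega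
    subst this; norm_num
  · norm_num
  · obtain ⟨-, -, h⟩ := h3
    have : k = 0 := by omega
    subst this; norm_num
  · norm_num
  · rfl

lemma fockPolar_CC {i j : I} (hi : isC i) (hj : isC j) : fockPolar i j = 0 := by
  rcases hi with hi | hi
  · rcases hj with hj | hj
    · simp only [fockPolar]
      split_ifs <;> first | rfl | omega
    · exact fockPolar_zero_right hj.1
  · exact fockPolar_zero_left hi.1

lemma fockPolar_ann {i j : I} (hi : 0 < i.2) (hj : j ≠ pd i) : fockPolar i j = 0 := by
  rcases i with ⟨a, k⟩; rcases j with ⟨b, l⟩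
  simp only [fockPolar]
  split_ifs with h1 h2 h3 h4 <;> try rfl
  all_goals
    exfalso; apply hj
    simp only [pd]
  · obtain ⟨ha, hb, hkl⟩ := h1
    subst ha; subst hb
    simp only [Matrix.cons_val_zero]
    exact Prod.ext rfl (by omega)
  · obtain ⟨ha, hb, hkl⟩ := h2
    subst ha; subst hb
    simp
    omega
  · obtain ⟨ha, hb, hkl⟩ := h3
    subst ha; subst hb
    simp
    omega
  · obtain ⟨ha, hb, hkl⟩ := h4
    subst ha; subst hb
    simp
    omega

lemma fockPolar_dual {i : I} (hi : 0 < i.2) : fockPolar i (pd i) ≠ 0 := by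
  rcases i with ⟨a, k⟩
  simp only at hi
  fin_cases a <;>
    simp [fockPolar, pd] <;>
    first
      | (intro h; omega)
      | (constructor <;> omega)
      | omega

/-- the two zero modes -/
def z0 : I := ((0 : Fin 4), (0 : ℤ))
def z1 : I := ((1 : Fin 4), (0 : ℤ))

lemma z0_ne_z1 : z0 ≠ z1 := by
  intro h
  exact absurd (congrArg Prod.fst h) (by simp [z0, z1])

lemma z0_isC : isC z0 := by right; exact ⟨rfl, Or.inl rfl⟩
lemma z1_isC : isC z1 := by right; exact ⟨rfl, Or.inr rfl⟩

lemma finset_subset_pair {a b : I} {Z : Finset I} (h : Z ⊆ {a, b}) :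
    Z = ∅ ∨ Z = {a} ∨ Z = {b} ∨ Z = {a, b} := by
  classical
  by_cases ha : a ∈ Z <;> by_cases hb : b ∈ Z
  · right; right; right
    ext x
    constructor
    · intro hx; exact h hx
    · intro hx
      rcases Finset.mem_insert.mp hx with rfl | hx
      · exact ha
      · rw [Finset.mem_singleton] at hx; subst hx; exact hb
  · right; left
    ext x
    constructor
    · intro hx
      rcases Finset.mem_insert.mp (h hx) with rfl | hx'
      · exact Finset.mem_singleton_self x
      · rw [Finset.mem_singleton] at hx'; subst hx'; exact absurd hx hb
    · intro hx
      rw [Finset.mem_singleton] at hx; subst hx; exact ha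
  · right; right; left
    ext x
    constructor
    · intro hx
      rcases Finset.mem_insert.mp (h hx) with rfl | hx'
      · exact absurd hx ha
      · exact hx'
    · intro hx
      rw [Finset.mem_singleton] at hx; subst hx; exact hb
  · left
    ext x
    simp only [Finset.notMem_empty, iff_false]
    intro hx
    rcases Finset.mem_insert.mp (h hx) with rfl | hx'
    · exact absurd hx ha
    · rw [Finset.mem_singleton] at hx'; subst hx'; exact absurd hx hb

/-- negative part of a finset of indices -/
def negS (S : Finset I) : Finset I := S.filter (fun i => i.2 < 0)

/-- zero part of a finset of indices -/
def zeroS (S : Finset I) : Finset I := S.filter (fun i => i.2 = 0)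

lemma mem_negS {S : Finset I} {i : I} : i ∈ negS S ↔ i ∈ S ∧ i.2 < 0 := Finset.mem_filter

lemma mem_zeroS {S : Finset I} {i : I} : i ∈ zeroS S ↔ i ∈ S ∧ i.2 = 0 := Finset.mem_filter

lemma zeroS_subset_pair {S : Finset I} (hC : ∀ i ∈ S, isC i) : zeroS S ⊆ {z0, z1} := by
  intro i hi
  obtain ⟨hiS, hi0⟩ := mem_zeroS.mp hi
  rcases hC i hiS with h | ⟨_, h⟩
  · omega
  · rcases h with h | h
    · exact Finset.mem_insert.mpr (Or.inl (Prod.ext h hi0))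
    · refine Finset.mem_insert.mpr (Or.inr (Finset.mem_singleton.mpr (Prod.ext h hi0)))

lemma sdiff_negS {S : Finset I} (hC : ∀ i ∈ S, isC i) : S \ negS S = zeroS S := by
  ext i
  simp only [Finset.mem_sdiff, mem_negS, mem_zeroS]
  constructor
  · rintro ⟨hiS, hn⟩
    refine ⟨hiS, ?_⟩
    rcases hC i hiS with h | ⟨h, _⟩
    · exact absurd ⟨hiS, h⟩ hn
    · exact h
  · rintro ⟨hiS, h0⟩
    exact ⟨hiS, fun hc => by omega⟩

lemma subset_negS {N S : Finset I} (hN : ∀ q ∈ N, q.2 < 0) (h : N ⊆ S) : N ⊆ negS S :=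
  fun q hq => mem_negS.mpr ⟨h hq, hN q hq⟩

lemma eq_of_parts {S T : Finset I} (hCS : ∀ i ∈ S, isC i) (hCT : ∀ i ∈ T, isC i)
    (hn : negS S = negS T) (hz : zeroS S = zeroS T) : S = T := by
  ext i
  constructor
  · intro hi
    rcases hCS i hi with h | ⟨h, _⟩
    · exact (mem_negS.mp (hn ▸ mem_negS.mpr ⟨hi, h⟩)).1
    · exact (mem_zeroS.mp (hz ▸ mem_zeroS.mpr ⟨hi, h⟩)).1
  · intro hi
    rcases hCT i hi with h | ⟨h, _⟩
    · exact (mem_negS.mp (hn ▸ mem_negS.mpr ⟨hi, h⟩)).1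
    · exact (mem_zeroS.mp (hz ▸ mem_zeroS.mpr ⟨hi, h⟩)).1

section Alg

variable (Q : QuadraticForm ℂ ((Fin 4 × ℤ) →₀ ℂ))

/-- the image of the basis vectors in the Clifford algebra -/
noncomputable def e (i : I) : CliffordAlgebra Q := CliffordAlgebra.ι Q (fockBasis i)

variable {hQ0junk : True}

abbrev HQ0 : Prop := ∀ i : Fin 4 × ℤ, Q (fockBasis i) = 0
abbrev HPolar : Prop := ∀ i j : Fin 4 × ℤ,
      QuadraticMap.polar (⇑Q) (fockBasis i) (fockBasis j) = fockPolar i j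

lemma e_mul (hpolar : ∀ i j : Fin 4 × ℤ,
      QuadraticMap.polar (⇑Q) (fockBasis i) (fockBasis j) = fockPolar i j) (i j : I) :
    e Q i * e Q j = algebraMap ℂ _ (fockPolar i j) - e Q j * e Q i := by
  rw [e, e, CliffordAlgebra.ι_mul_ι_comm, hpolar]

lemma e_sq (hQ0 : ∀ i : Fin 4 × ℤ, Q (fockBasis i) = 0) (i : I) : e Q i * e Q i = 0 := by
  rw [e, CliffordAlgebra.ι_sq_scalar, hQ0, map_zero]

lemma e_anticomm (hpolar : HPolar Q) {i j : I} (h : fockPolar i j = 0) :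
    e Q i * e Q j = -(e Q j * e Q i) := by
  rw [e_mul Q hpolar, h, map_zero, zero_sub]

/-- ordered monomial attached to a list of indices -/
noncomputable def mL (L : List I) : CliffordAlgebra Q := (L.map (e Q)).prod

@[simp] lemma mL_nil : mL Q [] = 1 := rfl

lemma mL_cons (i : I) (L : List I) : mL Q (i :: L) = e Q i * mL Q L := by
  simp [mL]

/-- pass an element anticommuting with all the factors through a monomial -/
lemma pass_through (x : CliffordAlgebra Q) :
    ∀ L : List I, (∀ j ∈ L, x * e Q j = -(e Q j * x)) →
      x * mL Q L = ((-1 : ℂ) ^ L.length) • (mL Q L * x)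
  | [], _ => by simp
  | j :: L, h => by
    have hj := h j (by simp)
    have ih := pass_through x L (fun k hk => h k (by simp [hk]))
    rw [mL_cons, ← mul_assoc, hj, List.length_cons, pow_succ]
    rw [neg_mul, mul_assoc, ih]
    rw [mul_smul_comm, mul_assoc]
    rw [← neg_smul]
    congr 1
    ring

/-- permutation changes a `C`-monomial by a nonzero scalar -/
lemma mL_perm (hpolar : HPolar Q) : ∀ {L L' : List I}, L.Perm L' → (∀ j ∈ L, isC j) →
    ∃ c : ℂ, c ≠ 0 ∧ mL Q L = c • mL Q L' := by
  intro L L' hp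
  induction hp with
  | nil => exact fun _ => ⟨1, one_ne_zero, (one_smul _ _).symm⟩
  | cons x _ ih =>
    intro hC
    obtain ⟨c, hc, hm⟩ := ih (fun j hj => hC j (List.mem_cons_of_mem _ hj))
    exact ⟨c, hc, by rw [mL_cons, hm, mul_smul_comm, mL_cons]⟩
  | swap a b L =>
    intro hC
    refine ⟨-1, by norm_num, ?_⟩
    rw [mL_cons, mL_cons, mL_cons, mL_cons, ← mul_assoc, ← mul_assoc]
    have : e Q b * e Q a = -(e Q a * e Q b) :=
      e_anticomm Q hpolar (fockPolar_CC (hC b (by simp)) (hC a (by simp)))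
    rw [this]
    simp
  | trans h1 h2 ih1 ih2 =>
    intro hC
    obtain ⟨c, hc, hm⟩ := ih1 hC
    obtain ⟨c', hc', hm'⟩ := ih2 (fun j hj => hC j (h1.mem_iff.mpr hj))
    exact ⟨c * c', mul_ne_zero hc hc', by rw [hm, hm', smul_smul]⟩

/-- canonical sorted list of a finset -/
noncomputable def ls (S : Finset I) : List I := S.sort rle

/-- canonical monomial of a finset of creation indices -/
noncomputable def cS (S : Finset I) : CliffordAlgebra Q := mL Q (ls S)

lemma cS_def (S : Finset I) : cS Q S = mL Q (ls S) := rfl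

lemma ls_nodup (S : Finset I) : (ls S).Nodup := S.sort_nodup rle

lemma ls_toFinset (S : Finset I) : (ls S).toFinset = S := S.sort_toFinset rle

lemma mem_ls {S : Finset I} {a : I} : a ∈ ls S ↔ a ∈ S := Finset.mem_sort rle

@[simp] lemma cS_empty : cS Q ∅ = 1 := by
  simp [cS, ls, Finset.sort_empty]

/-- any nodup `C`-list's monomial is a scalar multiple of the canonical one -/
lemma mL_eq_cS (hpolar : HPolar Q) {L : List I} (hnd : L.Nodup) (hC : ∀ j ∈ L, isC j) :
    ∃ c : ℂ, c ≠ 0 ∧ mL Q L = c • cS Q L.toFinset := by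
  exact mL_perm Q hpolar
    (List.perm_of_nodup_nodup_toFinset_eq hnd (ls_nodup _) (by rw [ls_toFinset])) hC

/-- creation operator on a canonical monomial: new index -/
lemma SP1 (hpolar : HPolar Q) {j : I} {S : Finset I} (hj : isC j)
    (hS : ∀ i ∈ S, isC i) (hjS : j ∉ S) :
    ∃ c : ℂ, c ≠ 0 ∧ e Q j * cS Q S = c • cS Q (insert j S) := by
  have hnd : (j :: ls S).Nodup := by
    rw [List.nodup_cons]
    exact ⟨fun h => hjS (mem_ls.mp h), ls_nodup S⟩
  have hC : ∀ i ∈ (j :: ls S), isC i := by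
    intro i hi
    rcases List.mem_cons.mp hi with rfl | hi
    · exact hj
    · exact hS i (mem_ls.mp hi)
  obtain ⟨c, hc, h⟩ := mL_eq_cS Q hpolar hnd hC
  have hfin : (j :: ls S).toFinset = insert j S := by
    rw [List.toFinset_cons, ls_toFinset]
  rw [hfin] at h
  exact ⟨c, hc, by rw [cS_def, ← mL_cons, h]⟩

/-- creation operator on a canonical monomial: repeated index gives zero -/
lemma SP2 (hQ0 : HQ0 Q) (hpolar : HPolar Q) {j : I} {S : Finset I}
    (hS : ∀ i ∈ S, isC i) (hjS : j ∈ S) :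
    e Q j * cS Q S = 0 := by
  have hmem : j ∈ ls S := mem_ls.mpr hjS
  have hperm := List.perm_cons_erase hmem
  have hC : ∀ i ∈ ls S, isC i := fun i hi => hS i (mem_ls.mp hi)
  obtain ⟨c, hc, h⟩ := mL_perm Q hpolar hperm hC
  rw [cS_def, h, mul_smul_comm, mL_cons, ← mul_assoc, e_sq Q hQ0, zero_mul, smul_zero]

lemma toFinset_erase_of_nodup {l : List I} (h : l.Nodup) (a : I) :
    (l.erase a).toFinset = l.toFinset.erase a := by
  ext b
  simp [h.mem_erase_iff, and_comm]

end Alg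

section Mod

variable (Q : QuadraticForm ℂ ((Fin 4 × ℤ) →₀ ℂ))
variable {V : Type} [AddCommGroup V] [Module (CliffordAlgebra Q) V]

/-- scalar action of `ℂ` through the algebra map -/
noncomputable def sm (c : ℂ) (w : V) : V := (algebraMap ℂ (CliffordAlgebra Q)) c • w

lemma sm_zero (w : V) : sm Q (0 : ℂ) w = 0 := by simp [sm]

lemma sm_zero' (c : ℂ) : sm Q c (0 : V) = 0 := by simp [sm]

lemma sm_one (w : V) : sm Q (1 : ℂ) w = w := by simp [sm]

lemma sm_sm (c d : ℂ) (w : V) : sm Q c (sm Q d w) = sm Q (c * d) w := by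
  simp [sm, ← mul_smul, map_mul]

lemma smul_sm (x : CliffordAlgebra Q) (c : ℂ) (w : V) :
    x • sm Q c w = sm Q c (x • w) := by
  simp only [sm, ← mul_smul, Algebra.commutes]

lemma sm_neg (c : ℂ) (w : V) : sm Q (-c) w = -sm Q c w := by
  simp [sm]

lemma sm_sub (c : ℂ) (w w' : V) : sm Q c (w - w') = sm Q c w - sm Q c w' := by
  simp [sm, smul_sub]

lemma eq_zero_of_sm_eq_zero {c : ℂ} (hc : c ≠ 0) {w : V} (h : sm Q c w = 0) : w = 0 := by
  have := congrArg (sm Q c⁻¹) h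
  rwa [sm_sm, inv_mul_cancel₀ hc, sm_one, sm_zero'] at this

lemma csmul_smul (c : ℂ) (x : CliffordAlgebra Q) (w : V) :
    (c • x) • w = sm Q c (x • w) := by
  rw [Algebra.smul_def, mul_smul, sm]

variable (hQ0 : HQ0 Q) (hpolar : HPolar Q)
variable (v : V)
variable (hann : ∀ f : Fin 4, ∀ k : ℤ, 0 < k →
      CliffordAlgebra.ι Q (fockBasis (f, k)) • v = 0)

include hpolar hann

lemma e_ann {i : I} (hi : 0 < i.2) : e Q i • v = 0 := by
  have := hann i.1 i.2 hi
  rwa [e]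

/-- action of a single annihilation operator on a creation monomial applied to `v` -/
lemma K1 (i : I) (hi : 0 < i.2) :
    ∀ L : List I, L.Nodup → (∀ j ∈ L, isC j) →
      (pd i ∉ L → e Q i • (mL Q L • v) = 0) ∧
      (pd i ∈ L → ∃ c : ℂ, c ≠ 0 ∧
        e Q i • (mL Q L • v) = sm Q c ((mL Q (L.erase (pd i))) • v))
  | [] => by
    intro _ _
    refine ⟨fun _ => ?_, fun h => absurd h List.not_mem_nil⟩
    simpa using e_ann Q hpolar v hann hi
  | j :: L => by
    intro hnd hC
    have hndL : L.Nodup := hnd.of_cons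
    have hCL : ∀ k ∈ L, isC k := fun k hk => hC k (List.mem_cons_of_mem _ hk)
    have ih := K1 i hi L hndL hCL
    have key : e Q i • (mL Q (j :: L) • v) =
        sm Q (fockPolar i j) (mL Q L • v) - e Q j • (e Q i • (mL Q L • v)) := by
      rw [mL_cons, mul_smul, ← mul_smul, e_mul Q hpolar, sub_smul, mul_smul]
      rfl
    by_cases hji : j = pd i
    · subst hji
      have hnotin : pd i ∉ L := (List.nodup_cons.mp hnd).1
      constructor
      · intro h; exact absurd (List.mem_cons_self) h
      · intro _
        refine ⟨fockPolar i (pd i), fockPolar_dual hi, ?_⟩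
        rw [key, (ih.1 hnotin), smul_zero, sub_zero, List.erase_cons_head]
    · have hpol : fockPolar i j = 0 := fockPolar_ann hi hji
      constructor
      · intro h
        have : pd i ∉ L := fun hmem => h (List.mem_cons_of_mem _ hmem)
        rw [key, hpol, sm_zero, ih.1 this, smul_zero, zero_sub, neg_zero]
      · intro h
        have hmem : pd i ∈ L := by
          rcases List.mem_cons.mp h with h' | h'
          · exact absurd h'.symm hji
          · exact h'
        obtain ⟨c, hc, hc2⟩ := ih.2 hmem
        refine ⟨-c, neg_ne_zero.mpr hc, ?_⟩
        rw [key, hpol, sm_zero, zero_sub, hc2, smul_sm, sm_neg]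
        rw [List.erase_cons_tail]
        · rw [mL_cons, mul_smul]
        · simp [hji]

/-- reformulation of `mL • v` in terms of the canonical monomial -/
lemma mLv_eq_cSv {L : List I} (hnd : L.Nodup) (hC : ∀ j ∈ L, isC j) :
    ∃ c : ℂ, c ≠ 0 ∧ mL Q L • v = sm Q c (cS Q L.toFinset • v) := by
  obtain ⟨c, hc, h⟩ := mL_eq_cS Q hpolar hnd hC
  exact ⟨c, hc, by rw [h, csmul_smul]⟩

/-- Finset version of `K1` -/
lemma K1F (i : I) (hi : 0 < i.2) (S : Finset I) (hS : ∀ j ∈ S, isC j) :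
    (pd i ∉ S → e Q i • (cS Q S • v) = 0) ∧
    (pd i ∈ S → ∃ c : ℂ, c ≠ 0 ∧
      e Q i • (cS Q S • v) = sm Q c (cS Q (S.erase (pd i)) • v)) := by
  have hC : ∀ j ∈ ls S, isC j := fun j hj => hS j (mem_ls.mp hj)
  have h := K1 Q hpolar v hann i hi (ls S) (ls_nodup S) hC
  constructor
  · intro hn
    exact h.1 (fun hmem => hn (mem_ls.mp hmem))
  · intro hmem
    obtain ⟨c, hc, hc2⟩ := h.2 (mem_ls.mpr hmem)
    have hnd' : ((ls S).erase (pd i)).Nodup := (ls_nodup S).erase _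
    have hC' : ∀ j ∈ (ls S).erase (pd i), isC j :=
      fun j hj => hC j (List.mem_of_mem_erase hj)
    obtain ⟨c', hc', hc2'⟩ := mLv_eq_cSv Q hpolar v hann hnd' hC'
    rw [toFinset_erase_of_nodup (ls_nodup S), ls_toFinset] at hc2'
    exact ⟨c * c', mul_ne_zero hc hc', by rw [cS_def, hc2, hc2', sm_sm]⟩

/-- iterated annihilation -/
lemma K2 : ∀ (P : List I), P.Nodup → (∀ q ∈ P, isC q ∧ q.2 < 0) →
    ∀ S : Finset I, (∀ j ∈ S, isC j) →
      (¬ P.toFinset ⊆ S → mL Q (P.map pd) • (cS Q S • v) = 0) ∧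
      (P.toFinset ⊆ S → ∃ c : ℂ, c ≠ 0 ∧
        mL Q (P.map pd) • (cS Q S • v) = sm Q c (cS Q (S \ P.toFinset) • v))
  | [] => by
    intro _ _ S hS
    constructor
    · intro h; exact absurd (by simp) h
    · intro _
      exact ⟨1, one_ne_zero, by simp [sm_one]⟩
  | q :: P => by
    intro hnd hneg S hS
    have hndP : P.Nodup := hnd.of_cons
    have hqP : q ∉ P := (List.nodup_cons.mp hnd).1
    have ih := K2 P hndP (fun r hr => hneg r (List.mem_cons_of_mem _ hr)) S hS
    have hq := hneg q (List.mem_cons_self)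
    have hpdq : 0 < (pd q).2 := by rw [pd_snd]; omega
    have hsplit : mL Q ((q :: P).map pd) • (cS Q S • v) =
        e Q (pd q) • (mL Q (P.map pd) • (cS Q S • v)) := by
      rw [List.map_cons, mL_cons, mul_smul]
    have hSP : ∀ j ∈ S \ P.toFinset, isC j :=
      fun j hj => hS j (Finset.mem_sdiff.mp hj).1
    constructor
    · intro hns
      by_cases hPS : P.toFinset ⊆ S
      · have hqS : q ∉ S \ P.toFinset := by
          intro hmem
          apply hns
          rw [List.toFinset_cons, Finset.insert_subset_iff]
          exact ⟨(Finset.mem_sdiff.mp hmem).1, hPS⟩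
        obtain ⟨c, hc, hc2⟩ := ih.2 hPS
        have := (K1F Q hpolar v hann (pd q) hpdq (S \ P.toFinset) hSP).1
        rw [pd_pd] at this
        rw [hsplit, hc2, smul_sm, this hqS, sm_zero']
      · rw [hsplit, ih.1 hPS, smul_zero]
    · intro hs
      rw [List.toFinset_cons, Finset.insert_subset_iff] at hs
      obtain ⟨hqS, hPS⟩ := hs
      obtain ⟨c, hc, hc2⟩ := ih.2 hPS
      have hqmem : q ∈ S \ P.toFinset := by
        rw [Finset.mem_sdiff]
        exact ⟨hqS, by simpa using hqP⟩
      obtain ⟨c', hc', hc2'⟩ := (K1F Q hpolar v hann (pd q) hpdq (S \ P.toFinset) hSP).2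
        (by rwa [pd_pd])
      rw [pd_pd] at hc2'
      have herase : (S \ P.toFinset).erase q = S \ (q :: P).toFinset := by
        ext b
        simp only [Finset.mem_erase, Finset.mem_sdiff, List.toFinset_cons, Finset.mem_insert,
          List.mem_toFinset]
        tauto
      refine ⟨c * c', mul_ne_zero hc hc', ?_⟩
      rw [hsplit, hc2, smul_sm, hc2', sm_sm, herase]
  
omit hann

lemma act_swap10 (hQ0 : HQ0 Q) (w : V) : e Q z1 • (e Q z0 • w) = -(e Q z0 • (e Q z1 • w)) := by
  rw [← mul_smul, e_anticomm Q hpolar (fockPolar_zero_left rfl), neg_smul, mul_smul]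

lemma act_sq0 (hQ0 : HQ0 Q) (w : V) : e Q z0 • (e Q z0 • w) = 0 := by
  rw [← mul_smul, e_sq Q hQ0, zero_smul]

lemma act_sq1 (hQ0 : HQ0 Q) (w : V) : e Q z1 • (e Q z1 • w) = 0 := by
  rw [← mul_smul, e_sq Q hQ0, zero_smul]

omit hpolar in
lemma cS_z0 : cS Q {z0} = e Q z0 := by
  rw [cS_def, ls, Finset.sort_singleton, mL_cons, mL_nil, mul_one]

omit hpolar in
lemma cS_z1 : cS Q {z1} = e Q z1 := by
  rw [cS_def, ls, Finset.sort_singleton, mL_cons, mL_nil, mul_one]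

lemma cS_pair : ∃ c : ℂ, c ≠ 0 ∧ cS Q {z0, z1} = c • (e Q z0 * e Q z1) := by
  have hnd : ([z0, z1] : List I).Nodup := by
    simp [z0_ne_z1]
  have hC : ∀ j ∈ ([z0, z1] : List I), isC j := by
    intro j hj
    rcases List.mem_cons.mp hj with rfl | hj
    · exact z0_isC
    rcases List.mem_cons.mp hj with rfl | hj
    · exact z1_isC
    exact absurd hj List.not_mem_nil
  obtain ⟨c, hc, h⟩ := mL_eq_cS Q hpolar hnd hC
  refine ⟨c⁻¹, inv_ne_zero hc, ?_⟩
  have hfin : ([z0, z1] : List I).toFinset = {z0, z1} := by simp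
  rw [hfin] at h
  have : mL Q [z0, z1] = e Q z0 * e Q z1 := by
    rw [mL_cons, mL_cons, mL_nil, mul_one]
  rw [← this, h, smul_smul, inv_mul_cancel₀ hc, one_smul]

/-- zero-mode completion operator -/
noncomputable def zc (Z : Finset I) : CliffordAlgebra Q :=
  if Z = ∅ then e Q z0 * e Q z1
  else if Z = {z0} then e Q z1
  else if Z = {z1} then e Q z0
  else 1

omit hpolar in
lemma zc_empty : zc Q ∅ = e Q z0 * e Q z1 := by unfold zc; simp

omit hpolar in
lemma zc_z0 : zc Q {z0} = e Q z1 := by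
  unfold zc
  rw [if_neg (Finset.singleton_ne_empty z0), if_pos rfl]

omit hpolar in
lemma zc_z1 : zc Q {z1} = e Q z0 := by
  unfold zc
  rw [if_neg (Finset.singleton_ne_empty z1),
    if_neg (fun h => z0_ne_z1 (Finset.singleton_injective h).symm), if_pos rfl]

omit hpolar in
lemma zc_pair : zc Q {z0, z1} = 1 := by
  unfold zc
  rw [if_neg, if_neg, if_neg]
  · intro h
    have := congrArg (z0 ∈ ·) h
    simp [z0_ne_z1] at this
  · intro h
    have := congrArg (z1 ∈ ·) h
    simp [Ne.symm z0_ne_z1] at this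
  · simp

lemma ZKEY (hQ0 : HQ0 Q) (Z₀ Z : Finset I) (h0 : Z₀ ⊆ {z0, z1}) (h1 : Z ⊆ {z0, z1})
    (hns : ¬ Z ⊂ Z₀) :
    (Z = Z₀ → ∃ c : ℂ, c ≠ 0 ∧ zc Q Z₀ • (cS Q Z • v) = sm Q c ((e Q z0 * e Q z1) • v)) ∧
    (Z ≠ Z₀ → zc Q Z₀ • (cS Q Z • v) = 0) := by
  obtain ⟨cp, hcp, hcpair⟩ := cS_pair Q hpolar
  have hz01 : z0 ≠ z1 := z0_ne_z1
  have hsne : ({z0} : Finset I) ≠ {z1} := fun h => hz01 (Finset.singleton_injective h)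
  have hpairv : zc Q ∅ • (cS Q {z0, z1} • v) = 0 := by
    rw [zc_empty, hcpair, csmul_smul, smul_sm, mul_smul, mul_smul,
      act_swap10 Q hpolar hQ0 (e Q z1 • v), act_sq1 Q hpolar hQ0]
    simp [sm_zero']
  rcases finset_subset_pair h0 with rfl | rfl | rfl | rfl <;>
    rcases finset_subset_pair h1 with rfl | rfl | rfl | rfl
  -- Z₀ = ∅
  · exact ⟨fun _ => ⟨1, one_ne_zero, by
      rw [zc_empty, cS_empty, one_smul, sm_one]⟩, fun h => absurd rfl h⟩
  · refine ⟨fun h => absurd h (Finset.singleton_ne_empty z0), fun _ => ?_⟩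
    rw [zc_empty, cS_z0, mul_smul, act_swap10 Q hpolar hQ0, smul_neg,
      act_sq0 Q hpolar hQ0, neg_zero]
  · refine ⟨fun h => absurd h (Finset.singleton_ne_empty z1), fun _ => ?_⟩
    rw [zc_empty, cS_z1, mul_smul, act_sq1 Q hpolar hQ0, smul_zero]
  · exact ⟨fun h => absurd h (Finset.insert_ne_empty _ _), fun _ => hpairv⟩
  -- Z₀ = {z0}
  · exact absurd (Finset.empty_ssubset.mpr (Finset.singleton_nonempty z0)) hns
  · refine ⟨fun _ => ⟨-1, by norm_num, ?_⟩, fun h => absurd rfl h⟩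
    rw [zc_z0, cS_z0, act_swap10 Q hpolar hQ0, ← mul_smul, sm_neg, sm_one]
  · exact ⟨fun h => absurd h.symm hsne, fun _ => by
      rw [zc_z0, cS_z1, act_sq1 Q hpolar hQ0]⟩
  · refine ⟨fun h => ?_, fun _ => ?_⟩
    · have := congrArg (z1 ∈ ·) h
      simp [Ne.symm hz01] at this
    · rw [zc_z0, hcpair, csmul_smul, smul_sm, mul_smul,
        act_swap10 Q hpolar hQ0 (e Q z1 • v), act_sq1 Q hpolar hQ0]
      simp [sm_zero']
  -- Z₀ = {z1}
  · exact absurd (Finset.empty_ssubset.mpr (Finset.singleton_nonempty z1)) hns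
  · exact ⟨fun h => absurd h hsne, fun _ => by
      rw [zc_z1, cS_z0, act_sq0 Q hpolar hQ0]⟩
  · refine ⟨fun _ => ⟨1, one_ne_zero, ?_⟩, fun h => absurd rfl h⟩
    rw [zc_z1, cS_z1, ← mul_smul, sm_one]
  · refine ⟨fun h => ?_, fun _ => ?_⟩
    · have := congrArg (z0 ∈ ·) h
      simp [hz01] at this
    · rw [zc_z1, hcpair, csmul_smul, smul_sm, mul_smul, act_sq0 Q hpolar hQ0, sm_zero']
  -- Z₀ = {z0, z1}
  · refine absurd ?_ hns
    apply Finset.ssubset_iff_subset_ne.mpr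
    exact ⟨Finset.empty_subset _, Ne.symm (Finset.insert_ne_empty _ _)⟩
  · refine absurd ?_ hns
    apply Finset.ssubset_iff_subset_ne.mpr
    refine ⟨Finset.singleton_subset_iff.mpr (Finset.mem_insert_self _ _), fun h => ?_⟩
    have := congrArg (z1 ∈ ·) h
    simp [Ne.symm hz01] at this
  · refine absurd ?_ hns
    apply Finset.ssubset_iff_subset_ne.mpr
    refine ⟨Finset.singleton_subset_iff.mpr (by simp), fun h => ?_⟩
    have := congrArg (z0 ∈ ·) h
    simp [hz01] at this
  · refine ⟨fun _ => ⟨cp, hcp, ?_⟩, fun h => absurd rfl h⟩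
    rw [zc_pair, one_smul, hcpair, csmul_smul, sm]

include hann

/-- linear independence of the canonical monomials applied to `v` -/
lemma indep (hQ0 : HQ0 Q) (hne : (e Q z0 * e Q z1) • v ≠ 0) (F : Finset (Finset I)) :
    (∀ S ∈ F, ∀ i ∈ S, isC i) → ∀ lam : Finset I → ℂ,
      (∑ S ∈ F, sm Q (lam S) (cS Q S • v)) = 0 → ∀ S ∈ F, lam S = 0 := by
  induction F using Finset.strongInduction with
  | _ F ih =>
    intro hCF lam hsum S₀ hS₀
    -- choose the distinguished element T₀
    obtain ⟨T₁, hT₁F, hT₁max'⟩ := Set.Finite.exists_maximalFor negS (↑F : Set (Finset I))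
      (F.finite_toSet) ⟨S₀, hS₀⟩
    have hT₁max : ∀ S ∈ (↑F : Set (Finset I)), negS T₁ ≤ negS S → negS T₁ = negS S :=
      fun S hS h => le_antisymm h (hT₁max' hS h)
    set F₁ : Finset (Finset I) := F.filter (fun S => negS S = negS T₁) with hF₁def
    have hT₁F₁ : T₁ ∈ F₁ := Finset.mem_filter.mpr ⟨hT₁F, rfl⟩
    obtain ⟨T₀, hT₀F₁, hT₀min'⟩ := Set.Finite.exists_minimalFor zeroS (↑F₁ : Set (Finset I))
      (F₁.finite_toSet) ⟨T₁, hT₁F₁⟩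
    have hT₀min : ∀ S ∈ (↑F₁ : Set (Finset I)), zeroS S ≤ zeroS T₀ → zeroS T₀ = zeroS S :=
      fun S hS h => le_antisymm (hT₀min' hS h) h
    have hT₀F₁' : T₀ ∈ F₁ := hT₀F₁
    have hT₀F : T₀ ∈ F := (Finset.mem_filter.mp hT₀F₁').1
    have hT₀neg : negS T₀ = negS T₁ := (Finset.mem_filter.mp hT₀F₁').2
    set N₀ : Finset I := negS T₀ with hN₀def
    set Z₀ : Finset I := zeroS T₀ with hZ₀def
    set P : List I := ls N₀ with hPdef
    have hPnodup : P.Nodup := ls_nodup N₀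
    have hPneg : ∀ q ∈ P, isC q ∧ q.2 < 0 := by
      intro q hq
      have := mem_ls.mp hq
      obtain ⟨hqT, hq2⟩ := mem_negS.mp this
      exact ⟨hCF T₀ hT₀F q hqT, hq2⟩
    have hPfin : P.toFinset = N₀ := ls_toFinset N₀
    -- apply the operators to the sum
    have h2 : ∑ S ∈ F, sm Q (lam S) (zc Q Z₀ • (mL Q (P.map pd) • (cS Q S • v))) = 0 := by
      have := congrArg (fun w => zc Q Z₀ • (mL Q (P.map pd) • w)) hsum
      simp only [smul_zero] at this
      rw [← this, Finset.smul_sum, Finset.smul_sum]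
      apply Finset.sum_congr rfl
      intro S _
      rw [smul_sm, smul_sm]
    -- each term vanishes except possibly S = T₀
    have hK2 := fun (S : Finset I) (hSF : S ∈ F) =>
      K2 Q hpolar v hann P hPnodup hPneg S (hCF S hSF)
    have hterm : ∀ S ∈ F, S ≠ T₀ →
        zc Q Z₀ • (mL Q (P.map pd) • (cS Q S • v)) = 0 := by
      intro S hSF hSne
      by_cases hsub : P.toFinset ⊆ S
      · obtain ⟨c, hc, hc2⟩ := (hK2 S hSF).2 hsub
        rw [hPfin] at hc2
        have hNsub : N₀ ⊆ negS S := subset_negS (fun q hq => (mem_negS.mp hq).2)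
          (hPfin ▸ hsub)
        have hNeq : negS S = N₀ := by
          rw [hT₀neg] at hNsub ⊢
          exact (hT₁max S hSF hNsub).symm
        have hSF₁ : S ∈ F₁ := Finset.mem_filter.mpr ⟨hSF, by rw [hNeq]; exact hT₀neg⟩
        have hsd : S \ N₀ = zeroS S := by
          rw [← hNeq]; exact sdiff_negS (hCF S hSF)
        have hzne : zeroS S ≠ Z₀ := by
          intro hz
          exact hSne (eq_of_parts (hCF S hSF) (hCF T₀ hT₀F) (by rw [hNeq]) hz)
        have hnss : ¬ zeroS S ⊂ Z₀ := by
          intro hss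
          exact hzne ((hT₀min S hSF₁ hss.subset).symm)
        have := (ZKEY Q hpolar v hQ0 Z₀ (zeroS S)
          (zeroS_subset_pair (hCF T₀ hT₀F)) (zeroS_subset_pair (hCF S hSF)) hnss).2 hzne
        rw [hc2, hsd, smul_sm, this, sm_zero']
      · rw [(hK2 S hSF).1 hsub, smul_zero]
    have hT0term : ∃ c : ℂ, c ≠ 0 ∧
        zc Q Z₀ • (mL Q (P.map pd) • (cS Q T₀ • v)) = sm Q c ((e Q z0 * e Q z1) • v) := by
      have hsub : P.toFinset ⊆ T₀ := by
        rw [hPfin]; exact Finset.filter_subset _ _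
      obtain ⟨c, hc, hc2⟩ := (hK2 T₀ hT₀F).2 hsub
      rw [hPfin] at hc2
      have hsd : T₀ \ N₀ = Z₀ := sdiff_negS (hCF T₀ hT₀F)
      obtain ⟨c', hc', hc2'⟩ := (ZKEY Q hpolar v hQ0 Z₀ Z₀
        (zeroS_subset_pair (hCF T₀ hT₀F)) (zeroS_subset_pair (hCF T₀ hT₀F))
        (fun h => h.ne rfl)).1 rfl
      exact ⟨c * c', mul_ne_zero hc hc', by
        rw [hc2, hsd, smul_sm, hc2', sm_sm]⟩
    -- conclude lam T₀ = 0
    obtain ⟨c, hc, hcT⟩ := hT0term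
    have h0 : ∀ S ∈ F, S ≠ T₀ →
        sm Q (lam S) (zc Q Z₀ • (mL Q (P.map pd) • (cS Q S • v))) = 0 := by
      intro S hSF hSne
      rw [hterm S hSF hSne, sm_zero']
    have hsingle : sm Q (lam T₀) (zc Q Z₀ • (mL Q (P.map pd) • (cS Q T₀ • v))) = 0 := by
      rw [← h2]
      exact (Finset.sum_eq_single_of_mem T₀ hT₀F h0).symm
    rw [hcT, sm_sm] at hsingle
    have hlamT₀ : lam T₀ = 0 := by
      by_contra hlam
      exact hne (eq_zero_of_sm_eq_zero Q (mul_ne_zero hlam hc) hsingle)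
    -- induct on the rest
    have hrest : ∀ S ∈ F.erase T₀, lam S = 0 := by
      apply ih (F.erase T₀) (Finset.erase_ssubset hT₀F)
        (fun S hS => hCF S (Finset.mem_of_mem_erase hS)) lam
      have hsplit := Finset.add_sum_erase F (fun S => sm Q (lam S) (cS Q S • v)) hT₀F
      beta_reduce at hsplit
      rw [hsum, hlamT₀, sm_zero, zero_add] at hsplit
      exact hsplit
    by_cases hS₀T : S₀ = T₀
    · rw [hS₀T]; exact hlamT₀
    · exact hrest S₀ (Finset.mem_erase.mpr ⟨hS₀T, hS₀⟩)

end Mod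

section Span

variable (Q : QuadraticForm ℂ ((Fin 4 × ℤ) →₀ ℂ))
variable (J : Submodule (CliffordAlgebra Q) (CliffordAlgebra Q))

/-- the span of canonical creation monomials -/
noncomputable def NN : Submodule ℂ (CliffordAlgebra Q) :=
  Submodule.span ℂ (Set.range (fun S : {S : Finset I // ∀ i ∈ S, isC i} => cS Q S.1))

/-- the candidate for the whole algebra : ideal plus monomial span -/
noncomputable def W : Submodule ℂ (CliffordAlgebra Q) :=
  (J.restrictScalars ℂ) ⊔ NN Q

lemma cS_mem_NN {S : Finset I} (hS : ∀ i ∈ S, isC i) : cS Q S ∈ NN Q :=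
  Submodule.subset_span ⟨⟨S, hS⟩, rfl⟩

lemma J_mem_W {x : CliffordAlgebra Q} (hx : x ∈ J) : x ∈ W Q J :=
  Submodule.mem_sup_left hx

lemma NN_le_W : NN Q ≤ W Q J := le_sup_right

lemma mul_mem_J {x y : CliffordAlgebra Q} (hx : x ∈ J) : y * x ∈ J := by
  simpa using J.smul_mem y hx

variable (hQ0 : HQ0 Q) (hpolar : HPolar Q)

include hQ0 hpolar

/-- closure of `W` under left multiplication by creation generators -/
lemma closeC {j : I} (hj : isC j) {w : CliffordAlgebra Q} (hw : w ∈ W Q J) :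
    e Q j * w ∈ W Q J := by
  rw [W, Submodule.mem_sup] at hw
  obtain ⟨a, ha, b, hb, rfl⟩ := hw
  rw [mul_add]
  apply Submodule.add_mem
  · exact J_mem_W Q J (mul_mem_J Q J ha)
  · refine Submodule.span_induction ?_ ?_ ?_ ?_ hb
    · rintro x ⟨⟨S, hS⟩, rfl⟩
      by_cases hjS : j ∈ S
      · rw [SP2 Q hQ0 hpolar hS hjS]
        exact Submodule.zero_mem _
      · obtain ⟨c, _, h⟩ := SP1 Q hpolar hj hS hjS
        rw [h]
        refine Submodule.smul_mem _ c (NN_le_W Q J (cS_mem_NN Q ?_))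
        intro i hi
        rcases Finset.mem_insert.mp hi with rfl | hi
        · exact hj
        · exact hS i hi
    · rw [mul_zero]; exact Submodule.zero_mem _
    · intro x y _ _ hx hy
      rw [mul_add]; exact Submodule.add_mem _ hx hy
    · intro c x _ hx
      rw [mul_smul_comm]; exact Submodule.smul_mem _ c hx

/-- annihilation generators map `C`-monomials into `W` -/
lemma LA (hgen : ∀ i : I, 0 < i.2 → e Q i ∈ J) {i : I} (hi : 0 < i.2) :
    ∀ L : List I, L.Nodup → (∀ j ∈ L, isC j) → e Q i * mL Q L ∈ W Q J
  | [] => by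
    intro _ _
    rw [mL_nil, mul_one]
    exact J_mem_W Q J (hgen i hi)
  | j :: L => by
    intro hnd hC
    have hndL : L.Nodup := hnd.of_cons
    have hCL : ∀ k ∈ L, isC k := fun k hk => hC k (List.mem_cons_of_mem _ hk)
    have ih := LA hgen hi L hndL hCL
    rw [mL_cons, ← mul_assoc, e_mul Q hpolar, sub_mul, mul_assoc]
    apply Submodule.sub_mem
    · rw [Algebra.algebraMap_eq_smul_one, smul_mul_assoc, one_mul]
      apply Submodule.smul_mem
      obtain ⟨c, _, h⟩ := mL_eq_cS Q hpolar hndL hCL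
      rw [h]
      exact Submodule.smul_mem _ c (NN_le_W Q J (cS_mem_NN Q
        (fun k hk => hCL k (List.mem_toFinset.mp hk))))
    · exact closeC Q J hQ0 hpolar (hC j (List.mem_cons_self)) ih

/-- anticommuting `J`-elements pass through monomials -/
lemma dpass {d : CliffordAlgebra Q} (hd : d ∈ J)
    (hdc : ∀ j : I, d * e Q j = -(e Q j * d)) {w : CliffordAlgebra Q} (hw : w ∈ W Q J) :
    d * w ∈ J.restrictScalars ℂ := by
  rw [W, Submodule.mem_sup] at hw
  obtain ⟨a, ha, b, hb, rfl⟩ := hw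
  rw [mul_add]
  apply Submodule.add_mem
  · exact mul_mem_J Q J ha
  · refine Submodule.span_induction ?_ ?_ ?_ ?_ hb
    · rintro x ⟨⟨S, hS⟩, rfl⟩
      show d * cS Q S ∈ _
      rw [cS_def, pass_through Q d (ls S) (fun j _ => hdc j)]
      exact Submodule.smul_mem _ _ (mul_mem_J Q J hd)
    · rw [mul_zero]; exact Submodule.zero_mem _
    · intro x y _ _ hx hy
      rw [mul_add]; exact Submodule.add_mem _ hx hy
    · intro c x _ hx
      rw [mul_smul_comm]; exact Submodule.smul_mem _ c hx

/-- `W` is closed under left multiplication by all generators -/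
lemma close (hgen : ∀ i : I, 0 < i.2 → e Q i ∈ J)
    (hd13 : e Q z1 - e Q ((3 : Fin 4), (0 : ℤ)) ∈ J)
    (hd02 : e Q z0 - e Q ((2 : Fin 4), (0 : ℤ)) ∈ J)
    (i : I) {w : CliffordAlgebra Q} (hw : w ∈ W Q J) : e Q i * w ∈ W Q J := by
  by_cases hC : isC i
  · exact closeC Q J hQ0 hpolar hC hw
  · by_cases hpos : 0 < i.2
    · rw [W, Submodule.mem_sup] at hw
      obtain ⟨a, ha, b, hb, rfl⟩ := hw
      rw [mul_add]
      apply Submodule.add_mem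
      · exact J_mem_W Q J (mul_mem_J Q J ha)
      · refine Submodule.span_induction ?_ ?_ ?_ ?_ hb
        · rintro x ⟨⟨S, hS⟩, rfl⟩
          show e Q i * cS Q S ∈ _
          rw [cS_def]
          exact LA Q J hQ0 hpolar hgen hpos (ls S) (ls_nodup S)
            (fun j hj => hS j (mem_ls.mp hj))
        · rw [mul_zero]; exact Submodule.zero_mem _
        · intro x y _ _ hx hy
          rw [mul_add]; exact Submodule.add_mem _ hx hy
        · intro c x _ hx
          rw [mul_smul_comm]; exact Submodule.smul_mem _ c hx
    · -- i is a barred zero mode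
      have hi0 : i.2 = 0 := by
        rcases i with ⟨f, k⟩
        simp only [isC] at hC hpos ⊢
        omega
      have hf23 : i.1 = 2 ∨ i.1 = 3 := by
        rcases i with ⟨f, k⟩
        simp only [isC] at hC
        fin_cases f <;> simp_all
      -- the corresponding unbarred zero mode
      set i' : I := (if i.1 = 2 then z0 else z1) with hi'def
      have hdiff : e Q i' - e Q i ∈ J := by
        rcases hf23 with h2 | h3
        · have : i = ((2 : Fin 4), (0 : ℤ)) := Prod.ext h2 hi0
          rw [hi'def, this]
          simpa using hd02
        · have : i = ((3 : Fin 4), (0 : ℤ)) := Prod.ext h3 hi0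
          have hne2 : i.1 ≠ 2 := by rw [h3]; decide
          rw [hi'def, this, if_neg (by rw [this] at hne2; exact hne2)]
          simpa using hd13
      have hi'C : isC i' := by
        rw [hi'def]
        split
        · exact z0_isC
        · exact z1_isC
      have hdc : ∀ j : I, (e Q i' - e Q i) * e Q j = -(e Q j * (e Q i' - e Q i)) := by
        intro j
        have h1 : e Q i' * e Q j = -(e Q j * e Q i') := by
          apply e_anticomm Q hpolar
          apply fockPolar_zero_left
          rw [hi'def]; split <;> rfl
        have h2 : e Q i * e Q j = -(e Q j * e Q i) :=
          e_anticomm Q hpolar (fockPolar_zero_left hi0)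
        rw [sub_mul, h1, h2, mul_sub]
        abel
      have key : e Q i * w = e Q i' * w - (e Q i' - e Q i) * w := by
        rw [sub_mul]
        abel
      rw [key]
      apply Submodule.sub_mem
      · exact closeC Q J hQ0 hpolar hi'C hw
      · exact J_mem_W Q J (dpass Q J hQ0 hpolar hdiff hdc hw)

/-- every element of the Clifford algebra lies in `W` -/
lemma span_all (hgen : ∀ i : I, 0 < i.2 → e Q i ∈ J)
    (hd13 : e Q z1 - e Q ((3 : Fin 4), (0 : ℤ)) ∈ J)
    (hd02 : e Q z0 - e Q ((2 : Fin 4), (0 : ℤ)) ∈ J)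
    (a : CliffordAlgebra Q) : a ∈ W Q J := by
  have h1 : (1 : CliffordAlgebra Q) ∈ W Q J := by
    have := cS_mem_NN Q (S := ∅) (fun i hi => absurd hi (Finset.notMem_empty i))
    rw [cS_empty] at this
    exact NN_le_W Q J this
  induction a using CliffordAlgebra.left_induction with
  | algebraMap r =>
    rw [Algebra.algebraMap_eq_smul_one]
    exact Submodule.smul_mem _ r h1
  | add x y hx hy => exact Submodule.add_mem _ hx hy
  | ι_mul x m hx =>
    have hdecomp : CliffordAlgebra.ι Q m = m.sum (fun i c => c • e Q i) := by
      conv_lhs => rw [← Finsupp.sum_single m]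
      rw [map_finsuppSum]
      apply Finsupp.sum_congr
      intro i _
      rw [e, ← map_smul]
      congr 1
      rw [fockBasis, Finsupp.smul_single, smul_eq_mul, mul_one]
    rw [hdecomp, Finsupp.sum, Finset.sum_mul]
    apply Submodule.sum_mem
    intro i _
    rw [smul_mul_assoc]
    exact Submodule.smul_mem _ _ (close Q J hQ0 hpolar hgen hd13 hd02 i hx)

end Span

section Finish

variable (Q : QuadraticForm ℂ ((Fin 4 × ℤ) →₀ ℂ))
variable (hQ0 : HQ0 Q) (hpolar : HPolar Q)
variable (J : Submodule (CliffordAlgebra Q) (CliffordAlgebra Q))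
variable (hJ : J = Submodule.span (CliffordAlgebra Q)
      ({x | ∃ f : Fin 4, ∃ k : ℤ, 0 < k ∧ x = CliffordAlgebra.ι Q (fockBasis (f, k))} ∪
        {CliffordAlgebra.ι Q (fockBasis (1, 0)) - CliffordAlgebra.ι Q (fockBasis (3, 0)),
          CliffordAlgebra.ι Q (fockBasis (0, 0)) - CliffordAlgebra.ι Q (fockBasis (2, 0))}))
variable {V : Type} [AddCommGroup V] [Module (CliffordAlgebra Q) V]
variable (v : V)
variable (hann : ∀ f : Fin 4, ∀ k : ℤ, 0 < k →
      CliffordAlgebra.ι Q (fockBasis (f, k)) • v = 0)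
variable (heta : (CliffordAlgebra.ι Q (fockBasis (1, 0))
        - CliffordAlgebra.ι Q (fockBasis (3, 0))) • v = 0)
variable (hchi : (CliffordAlgebra.ι Q (fockBasis (0, 0))
        - CliffordAlgebra.ι Q (fockBasis (2, 0))) • v = 0)

include hJ

lemma hgen_of_hJ : ∀ i : I, 0 < i.2 → e Q i ∈ J := by
  intro i hi
  rw [hJ]
  apply Submodule.subset_span
  exact Or.inl ⟨i.1, i.2, hi, rfl⟩

lemma hd13_of_hJ : e Q z1 - e Q ((3 : Fin 4), (0 : ℤ)) ∈ J := by
  rw [hJ]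
  apply Submodule.subset_span
  exact Or.inr (Set.mem_insert _ _)

lemma hd02_of_hJ : e Q z0 - e Q ((2 : Fin 4), (0 : ℤ)) ∈ J := by
  rw [hJ]
  apply Submodule.subset_span
  exact Or.inr (Set.mem_insert_of_mem _ rfl)

include hann heta hchi

lemma J_ann : ∀ x ∈ J, x • v = 0 := by
  intro x hx
  rw [hJ] at hx
  refine Submodule.span_induction ?_ ?_ ?_ ?_ hx
  · rintro y (⟨f, k, hk, rfl⟩ | hy)
    · exact hann f k hk
    · rcases hy with rfl | hy
      · exact heta
      · rw [Set.mem_singleton_iff] at hy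
        subst hy
        exact hchi
  · exact zero_smul _ v
  · intro a b _ _ ha hb
    rw [add_smul, ha, hb, add_zero]
  · intro r a _ ha
    rw [smul_eq_mul, mul_smul, ha, smul_zero]

include hQ0 hpolar

lemma ann_sub_J (hne : (CliffordAlgebra.ι Q (fockBasis (0, 0))
        * CliffordAlgebra.ι Q (fockBasis (1, 0))) • v ≠ 0)
    {a : CliffordAlgebra Q} (ha : a • v = 0) : a ∈ J := by
  classical
  have hne' : (e Q z0 * e Q z1) • v ≠ 0 := hne
  have hW := span_all Q J hQ0 hpolar (hgen_of_hJ Q J hJ) (hd13_of_hJ Q J hJ)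
    (hd02_of_hJ Q J hJ) a
  rw [W, Submodule.mem_sup] at hW
  obtain ⟨x, hx, n, hn, rfl⟩ := hW
  have hxv : x • v = 0 := J_ann Q J hJ v hann heta hchi x hx
  have hnv : n • v = 0 := by
    have : (x + n) • v = x • v + n • v := add_smul x n v
    rw [ha, hxv, zero_add] at this
    exact this.symm
  suffices hn0 : n = 0 by
    rw [hn0, add_zero]
    exact hx
  rw [NN, Finsupp.mem_span_range_iff_exists_finsupp] at hn
  obtain ⟨cfun, hcfun⟩ := hn
  set lam : Finset I → ℂ := fun T => if h : ∀ i ∈ T, isC i then cfun ⟨T, h⟩ else 0 with hlam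
  set F : Finset (Finset I) := cfun.support.image Subtype.val with hF
  have hCF : ∀ S ∈ F, ∀ i ∈ S, isC i := by
    intro S hS
    obtain ⟨⟨T, hT⟩, _, rfl⟩ := Finset.mem_image.mp hS
    exact hT
  have hlam_eq : ∀ Ssub : {S : Finset I // ∀ i ∈ S, isC i}, lam Ssub.1 = cfun Ssub := by
    rintro ⟨T, hT⟩
    simp only [hlam, dif_pos hT]
  have hsum : ∑ S ∈ F, sm Q (lam S) (cS Q S • v) = 0 := by
    rw [hF, Finset.sum_image (fun a _ b _ h => Subtype.val_injective h)]
    rw [← hnv]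
    rw [← hcfun, Finsupp.sum, Finset.sum_smul]
    apply Finset.sum_congr rfl
    intro Ssub _
    rw [hlam_eq, csmul_smul]
  have hzero := indep Q hpolar v hann hQ0 hne' F hCF lam hsum
  have hall : ∀ Ssub ∈ cfun.support, cfun Ssub = 0 := by
    intro Ssub hSsub
    rw [← hlam_eq]
    exact hzero Ssub.1 (Finset.mem_image_of_mem _ hSsub)
  rw [← hcfun, Finsupp.sum]
  apply Finset.sum_eq_zero
  intro Ssub hSsub
  rw [hall Ssub hSsub, zero_smul]

end Finish

end FockAux

/-- Let `Q` be the quadratic form on `H` vanishing on the basis vectors and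
with polar form `fockPolar`, `A := CliffordAlgebra Q`, `J` the left ideal generated by
`{χ_k, η_k, χ̄_k, η̄_k : k > 0} ∪ {η₀ − η̄₀, χ₀ − χ̄₀}`, `Fock := A ⧸ J` and `ω := 1 + J`.
Then for every left `A`-module `V` and every `v ≠ 0` annihilated by the positive modes and
by `η₀ − η̄₀` and `χ₀ − χ̄₀`, with `χ₀ η₀ v ≠ 0`, there is a unique `A`-module map
`φ : Fock → V` with `φ ω = v`; moreover any such `φ` is injective with range the cyclic
submodule `A·v`, i.e. `φ` is an isomorphism onto `A·v`. -/
theorem fock_module_universal_property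
    (Q : QuadraticForm ℂ ((Fin 4 × ℤ) →₀ ℂ))
    (hQ0 : ∀ i : Fin 4 × ℤ, Q (fockBasis i) = 0)
    (hpolar : ∀ i j : Fin 4 × ℤ,
      QuadraticMap.polar (⇑Q) (fockBasis i) (fockBasis j) = fockPolar i j)
    (J : Submodule (CliffordAlgebra Q) (CliffordAlgebra Q))
    (hJ : J = Submodule.span (CliffordAlgebra Q)
      ({x | ∃ f : Fin 4, ∃ k : ℤ, 0 < k ∧ x = CliffordAlgebra.ι Q (fockBasis (f, k))} ∪
        {CliffordAlgebra.ι Q (fockBasis (1, 0)) - CliffordAlgebra.ι Q (fockBasis (3, 0)),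
          CliffordAlgebra.ι Q (fockBasis (0, 0)) - CliffordAlgebra.ι Q (fockBasis (2, 0))}))
    (V : Type) [AddCommGroup V] [Module (CliffordAlgebra Q) V]
    (v : V) (hv : v ≠ 0)
    (hann : ∀ f : Fin 4, ∀ k : ℤ, 0 < k →
      CliffordAlgebra.ι Q (fockBasis (f, k)) • v = 0)
    (heta : (CliffordAlgebra.ι Q (fockBasis (1, 0))
        - CliffordAlgebra.ι Q (fockBasis (3, 0))) • v = 0)
    (hchi : (CliffordAlgebra.ι Q (fockBasis (0, 0))
        - CliffordAlgebra.ι Q (fockBasis (2, 0))) • v = 0)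
    (hne : (CliffordAlgebra.ι Q (fockBasis (0, 0))
        * CliffordAlgebra.ι Q (fockBasis (1, 0))) • v ≠ 0) :
    (∃! φ : (CliffordAlgebra Q ⧸ J) →ₗ[CliffordAlgebra Q] V,
        φ (Submodule.Quotient.mk (1 : CliffordAlgebra Q)) = v) ∧
      ∀ φ : (CliffordAlgebra Q ⧸ J) →ₗ[CliffordAlgebra Q] V,
        φ (Submodule.Quotient.mk (1 : CliffordAlgebra Q)) = v →
          Function.Injective φ ∧
            LinearMap.range φ = Submodule.span (CliffordAlgebra Q) {v} := by
  classical
  have hmk : ∀ (ψ : (CliffordAlgebra Q ⧸ J) →ₗ[CliffordAlgebra Q] V),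
      ψ (Submodule.Quotient.mk 1) = v → ∀ a : CliffordAlgebra Q,
        ψ (Submodule.Quotient.mk a) = a • v := by
    intro ψ hψ a
    have h1 : (Submodule.Quotient.mk a : CliffordAlgebra Q ⧸ J)
        = a • (Submodule.Quotient.mk (1 : CliffordAlgebra Q)) := by
      rw [← Submodule.Quotient.mk_smul, smul_eq_mul, mul_one]
    rw [h1, map_smul, hψ]
  let φ₀ : CliffordAlgebra Q →ₗ[CliffordAlgebra Q] V :=
    { toFun := fun a => a • v
      map_add' := fun a b => add_smul a b v
      map_smul' := fun a b => by
        simp only [smul_eq_mul, RingHom.id_apply, mul_smul] }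
  have hker : J ≤ LinearMap.ker φ₀ := fun x hx =>
    LinearMap.mem_ker.mpr (FockAux.J_ann Q J hJ v hann heta hchi x hx)
  let φ : (CliffordAlgebra Q ⧸ J) →ₗ[CliffordAlgebra Q] V := J.liftQ φ₀ hker
  have hφ : φ (Submodule.Quotient.mk 1) = v := by
    show φ₀ 1 = v
    exact one_smul _ v
  constructor
  · refine ⟨φ, hφ, ?_⟩
    intro ψ hψ
    apply LinearMap.ext
    intro y
    obtain ⟨a, rfl⟩ := Submodule.Quotient.mk_surjective J y
    rw [hmk ψ hψ a, hmk φ hφ a]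
  · intro ψ hψ
    constructor
    · intro y1 y2 h
      obtain ⟨a1, rfl⟩ := Submodule.Quotient.mk_surjective J y1
      obtain ⟨a2, rfl⟩ := Submodule.Quotient.mk_surjective J y2
      rw [hmk ψ hψ a1, hmk ψ hψ a2] at h
      have hsub : (a1 - a2) • v = 0 := by rw [sub_smul, h, sub_self]
      have hJm : a1 - a2 ∈ J :=
        FockAux.ann_sub_J Q hQ0 hpolar J hJ v hann heta hchi hne hsub
      exact (Submodule.Quotient.eq J).mpr hJm
    · apply le_antisymm
      · rintro w ⟨y, rfl⟩
        obtain ⟨a, rfl⟩ := Submodule.Quotient.mk_surjective J y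
        rw [hmk ψ hψ a]
        exact Submodule.mem_span_singleton.mpr ⟨a, rfl⟩
      · rw [Submodule.span_le, Set.singleton_subset_iff]
        exact ⟨Submodule.Quotient.mk 1, hψ⟩
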